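/- arXiv:1206.5694 — 3 statements merged into one kernel-verified Lean document; each statement's English description precedes it below -/
import Mathlib

section
/- Let ρ: l → r ⇐ s_1 ↠ t_1; …; s_k ↠ t_k be an extended deterministic conditional rewrite rule. Then ρ is ultra-left-linear w.r.t. the optimized unraveling U_opt (i.e., every rule of U_opt(ρ) is left-linear) if and only if all of l, t_1, …, t_k are linear and Var(t_i) ∩ X_i = ∅ for all 1 ≤ i ≤ k. -/
set_option maxHeartbeats 1000000

universe u

/-! ## Terms -/

inductive Term (α : Type u) : Type u where
  | var : ℕ → Term α
  | app : α → List (Term α) → Term α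

namespace Term

variable {α : Type u}

/-- The list of variable occurrences of a term (left-to-right). -/
def varList : Term α → List ℕ
  | var x => [x]
  | app _ ts => ts.attach.foldr (fun t acc => varList t.1 ++ acc) []
decreasing_by
  simp only [Term.app.sizeOf_spec]
  have := List.sizeOf_lt_of_mem t.2
  omega

/-- The list of (function symbol, number of arguments) occurrences of a term. -/
def apps : Term α → List (α × ℕ)
  | var _ => []
  | app f ts => (f, ts.length) :: ts.attach.foldr (fun t acc => apps t.1 ++ acc) []
decreasing_by
  simp only [Term.app.sizeOf_spec]
  have := List.sizeOf_lt_of_mem t.2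
  omega

/-- `Var(t)`: the set of variables of a term. -/
def varFinset (t : Term α) : Finset ℕ := t.varList.toFinset

/-- All function symbols of the term belong to the signature `F`. -/
def overSig (F : Set α) (t : Term α) : Prop := ∀ p ∈ t.apps, p.1 ∈ F

/-- `t ∈ T(F,V)`: all function symbols belong to `F` and are applied
according to their arities. -/
def inT (F : Set α) (ar : α → ℕ) (t : Term α) : Prop :=
  ∀ p ∈ t.apps, p.1 ∈ F ∧ ar p.1 = p.2

/-- A term is linear if no variable occurs twice in it. -/
def Linear (t : Term α) : Prop := t.varList.Nodup

/-- A term is ground if it contains no variable. -/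
def Ground (t : Term α) : Prop := t.varList = []

/-- Applying a substitution to a term. -/
def subst (σ : ℕ → Term α) : Term α → Term α
  | var x => σ x
  | app f ts => app f (ts.attach.map (fun t => subst σ t.1))
decreasing_by
  simp only [Term.app.sizeOf_spec]
  have := List.sizeOf_lt_of_mem t.2
  omega

def isVar : Term α → Prop
  | var _ => True
  | app _ _ => False

def root? : Term α → Option α
  | var _ => none
  | app f _ => some f

def args : Term α → List (Term α)
  | var _ => []
  | app _ ts => ts

end Term

def junkPair {α : Type u} : Term α × Term α := (Term.var 0, Term.var 0)

/-! ## Conditional rewrite rules -/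

/-- An extended (oriented) conditional rewrite rule `l → r ⇐ s₁ ↠ t₁; …; s_k ↠ t_k`,
where `conds` is the list of pairs `(sᵢ, tᵢ)`. -/
structure ERule (α : Type u) : Type u where
  lhs : Term α
  rhs : Term α
  conds : List (Term α × Term α)

namespace ERule

variable {α : Type u}

def nonLV (ρ : ERule α) : Prop := ¬ ρ.lhs.isVar
def nonRV (ρ : ERule α) : Prop := ¬ ρ.rhs.isVar

/-- `X_{j+1} = Var(l, t_1, …, t_j)` (0-based index `j`). -/
def Xset (ρ : ERule α) (j : ℕ) : Finset ℕ :=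
  ρ.lhs.varFinset ∪ ((ρ.conds.take j).map (fun c => c.2.varFinset)).foldr (· ∪ ·) ∅

/-- `Y_{j+1} = Var(r, t_{j+1}, s_{j+2}, t_{j+2}, …, s_k, t_k)` (0-based index `j`). -/
def Yset (ρ : ERule α) (j : ℕ) : Finset ℕ :=
  ρ.rhs.varFinset ∪ (ρ.conds.getD j junkPair).2.varFinset ∪
    ((ρ.conds.drop (j+1)).map (fun c => c.1.varFinset ∪ c.2.varFinset)).foldr (· ∪ ·) ∅

/-- `Z_i = X_i ∩ Y_i`. -/
def Zset (ρ : ERule α) (j : ℕ) : Finset ℕ := ρ.Xset j ∩ ρ.Yset j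

/-- Determinism: `Var(sᵢ) ⊆ Var(l, t₁, …, t_{i-1})`. -/
def Det (ρ : ERule α) : Prop :=
  ∀ j < ρ.conds.length, (ρ.conds.getD j junkPair).1.varFinset ⊆ ρ.Xset j

/-- Type 3: `Var(r) ⊆ Var(l, s₁, t₁, …, s_k, t_k)`. -/
def Type3 (ρ : ERule α) : Prop :=
  ρ.rhs.varFinset ⊆
    ρ.lhs.varFinset ∪ ((ρ.conds.map (fun c => c.1.varFinset ∪ c.2.varFinset)).foldr (· ∪ ·) ∅)

/-- Left-linearity of a rule. -/
def LL (ρ : ERule α) : Prop := ρ.lhs.Linear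
/-- Right-linearity of a rule. -/
def RL (ρ : ERule α) : Prop := ρ.rhs.Linear
/-- Non-erasingness of a rule: `Var(l) ⊆ Var(r)`. -/
def NE (ρ : ERule α) : Prop := ρ.lhs.varFinset ⊆ ρ.rhs.varFinset

/-- `EVar(l → r) = Var(r) \\ Var(l)`, the extra variables of a rule. -/
def extraVars (ρ : ERule α) : Finset ℕ := ρ.rhs.varFinset \ ρ.lhs.varFinset

/-- The inverted rule `(l → r ⇐ s₁ ↠ t₁; …; s_k ↠ t_k)⁻¹ = r → l ⇐ t_k ↠ s_k; …; t₁ ↠ s₁`. -/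
def inv (ρ : ERule α) : ERule α :=
  ⟨ρ.rhs, ρ.lhs, (ρ.conds.map (fun c => (c.2, c.1))).reverse⟩

def allVarFinset (ρ : ERule α) : Finset ℕ :=
  ρ.lhs.varFinset ∪ ρ.rhs.varFinset ∪
    ((ρ.conds.map (fun c => c.1.varFinset ∪ c.2.varFinset)).foldr (· ∪ ·) ∅)

/-- A number strictly larger than every variable of the rule; used to pick fresh variables. -/
def freshBase (ρ : ERule α) : ℕ := ρ.allVarFinset.sup id + 1

/-- All terms of the rule use only symbols of `F`. -/
def overSig (F : Set α) (ρ : ERule α) : Prop :=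
  ρ.lhs.overSig F ∧ ρ.rhs.overSig F ∧ ∀ c ∈ ρ.conds, c.1.overSig F ∧ c.2.overSig F

/-- All terms of the rule are in `T(F,V)` (symbols of `F`, arity-correct). -/
def inT (F : Set α) (ar : α → ℕ) (ρ : ERule α) : Prop :=
  ρ.lhs.inT F ar ∧ ρ.rhs.inT F ar ∧ ∀ c ∈ ρ.conds, c.1.inT F ar ∧ c.2.inT F ar

end ERule

/-! ## Reduction relations -/

/-- One-hole contexts. -/
inductive Ctx (α : Type u) : Type u where
  | hole : Ctx α
  | app : α → List (Term α) → Ctx α → List (Term α) → Ctx α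

def Ctx.plug {α : Type u} : Ctx α → Term α → Term α
  | .hole, t => t
  | .app f pre c post, t => .app f (pre ++ c.plug t :: post)

/-- The approximations `→_{(n),R}` of the reduction relation of an oriented eCTRS. -/
def RedN {α : Type u} (R : Set (ERule α)) : ℕ → Term α → Term α → Prop
  | 0 => fun _ _ => False
  | n + 1 => fun s t =>
      RedN R n s t ∨
      ∃ ρ ∈ R, ∃ C : Ctx α, ∃ σ : ℕ → Term α,
        s = C.plug (ρ.lhs.subst σ) ∧ t = C.plug (ρ.rhs.subst σ) ∧
        ∀ c ∈ ρ.conds, Relation.ReflTransGen (RedN R n) (c.1.subst σ) (c.2.subst σ)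

/-- The reduction relation `→_R` of an oriented eCTRS. -/
def Red {α : Type u} (R : Set (ERule α)) (s t : Term α) : Prop := ∃ n, RedN R n s t

/-- `→*_R`. -/
def RedStar {α : Type u} (R : Set (ERule α)) : Term α → Term α → Prop :=
  Relation.ReflTransGen (Red R)

/-- The approximations of the reduction relation of a join CTRS
(conditions interpreted as joinability). -/
def JRedN {α : Type u} (R : Set (ERule α)) : ℕ → Term α → Term α → Prop
  | 0 => fun _ _ => False
  | n + 1 => fun s t =>
      JRedN R n s t ∨
      ∃ ρ ∈ R, ∃ C : Ctx α, ∃ σ : ℕ → Term α,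
        s = C.plug (ρ.lhs.subst σ) ∧ t = C.plug (ρ.rhs.subst σ) ∧
        ∀ c ∈ ρ.conds, ∃ w, Relation.ReflTransGen (JRedN R n) (c.1.subst σ) w ∧
          Relation.ReflTransGen (JRedN R n) (c.2.subst σ) w

/-- The reduction relation of a join CTRS. -/
def JRed {α : Type u} (R : Set (ERule α)) (s t : Term α) : Prop := ∃ n, JRedN R n s t

def JRedStar {α : Type u} (R : Set (ERule α)) : Term α → Term α → Prop :=
  Relation.ReflTransGen (JRed R)

/-- The underlying unconditional system `R_u`. -/
def Ru {α : Type u} (R : Set (ERule α)) : Set (ERule α) :=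
  (fun ρ : ERule α => ⟨ρ.lhs, ρ.rhs, []⟩) '' R

/-- Normal form w.r.t. a system. -/
def IsNF {α : Type u} (R : Set (ERule α)) (t : Term α) : Prop := ∀ w, ¬ Red R t w

/-! ## Unravelings for deterministic CTRSs -/

/-- The fixed-order sequence of a finite set of variables. -/
def seqOf (s : Finset ℕ) : List ℕ := s.sort (· ≤ ·)

/-- `U(t, x⃗)`: a U symbol applied to a term followed by a sequence of variables. -/
def mkU {α : Type u} (f : α) (t : Term α) (xs : List ℕ) : Term α :=
  .app f (t :: xs.map Term.var)

/-- Generic sequential unraveling of a single deterministic rule, where `carry j` is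
the variable sequence carried by the `j`-th U symbol. -/
def unravelWith {α : Type u} (carry : ℕ → List ℕ) (u : ℕ → α) (ρ : ERule α) :
    List (ERule α) :=
  (List.range (ρ.conds.length + 1)).map (fun j =>
    ⟨ if j = 0 then ρ.lhs else mkU (u (j-1)) (ρ.conds.getD (j-1) junkPair).2 (carry (j-1)),
      if j < ρ.conds.length then mkU (u j) (ρ.conds.getD j junkPair).1 (carry j) else ρ.rhs,
      [] ⟩)

/-- Ohlebusch's unraveling `U` of a single rule (carrying `X⃗ᵢ`). -/
def unravelU {α : Type u} (u : ℕ → α) (ρ : ERule α) : List (ERule α) :=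
  unravelWith (fun j => seqOf (ρ.Xset j)) u ρ

/-- The optimized unraveling `U_opt` of a single rule (carrying `Z⃗ᵢ`). -/
def unravelOpt {α : Type u} (u : ℕ → α) (ρ : ERule α) : List (ERule α) :=
  unravelWith (fun j => seqOf (ρ.Zset j)) u ρ

/-- `U(R)`. -/
def USys {α : Type u} (u : ERule α → ℕ → α) (R : Set (ERule α)) : Set (ERule α) :=
  { q | ∃ ρ ∈ R, q ∈ unravelU (u ρ) ρ }

/-- `U_opt(R)`. -/
def UoptSys {α : Type u} (u : ERule α → ℕ → α) (R : Set (ERule α)) : Set (ERule α) :=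
  { q | ∃ ρ ∈ R, q ∈ unravelOpt (u ρ) ρ }

/-- The U symbols introduced for the rules of `R`. -/
def USymbols {α : Type u} (u : ERule α → ℕ → α) (R : Set (ERule α)) : Set α :=
  { a | ∃ ρ ∈ R, ∃ i < ρ.conds.length, a = u ρ i }

/-- Freshness of the U symbols: they do not occur in `F` and are pairwise distinct. -/
def UFresh {α : Type u} (F : Set α) (u : ERule α → ℕ → α) (R : Set (ERule α)) : Prop :=
  (∀ ρ ∈ R, ∀ i < ρ.conds.length, u ρ i ∉ F) ∧
  (∀ ρ ∈ R, ∀ ρ' ∈ R, ∀ i < ρ.conds.length, ∀ j < ρ'.conds.length,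
      u ρ i = u ρ' j → ρ = ρ' ∧ i = j)

/-! ## Positions, parallel reduction, EV-safe reduction -/

abbrev Pos := List ℕ

/-- Subterm at a position. -/
def Term.sub? {α : Type u} : Pos → Term α → Option (Term α)
  | [], t => some t
  | _ :: _, .var _ => none
  | i :: p, .app _ ts => (ts[i]?).bind (Term.sub? p)

/-- Replacing the subterm at a position by `w`. -/
def Term.replaceAt {α : Type u} (w : Term α) : Pos → Term α → Term α
  | [], _ => w
  | _ :: _, .var x => .var x
  | i :: p, .app f ts =>
      .app f (ts.mapIdx (fun j s => if j = i then Term.replaceAt w p s else s))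

/-- `Pos_F(t)`: non-variable positions of `t`. -/
def PosF {α : Type u} (t : Term α) : Set Pos :=
  { p | ∃ f ts, Term.sub? p t = some (Term.app f ts) }

/-- `Pos_V(t)`: variable positions of `t`. -/
def PosV {α : Type u} (t : Term α) : Set Pos :=
  { p | ∃ x, Term.sub? p t = some (Term.var x) }

/-- One rewrite step of an eTRS at position `p`. -/
def RedAt {α : Type u} (R : Set (ERule α)) (p : Pos) (s t : Term α) : Prop :=
  ∃ ρ ∈ R, ρ.conds = [] ∧ ∃ σ : ℕ → Term α,
    Term.sub? p s = some (ρ.lhs.subst σ) ∧ t = Term.replaceAt (ρ.rhs.subst σ) p s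

/-- Two positions are parallel. -/
def ParallelPos (p q : Pos) : Prop := ¬ p <+: q ∧ ¬ q <+: p

/-- A sequence of single steps at the listed positions. -/
inductive RedSeqAt {α : Type u} (R : Set (ERule α)) : List Pos → Term α → Term α → Prop
  | nil (t : Term α) : RedSeqAt R [] t t
  | cons {ps s s' t} (p : Pos) : RedAt R p s s' → RedSeqAt R ps s' t →
      RedSeqAt R (p :: ps) s t

/-- One parallel rewrite step contracting the (pairwise parallel) positions in `P`. -/
def ParStep {α : Type u} (R : Set (ERule α)) (P : List Pos) (s t : Term α) : Prop :=
  P.Pairwise ParallelPos ∧ RedSeqAt R P s t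

/-- The parallel reduction `⇉_R`. -/
def ParRed {α : Type u} (R : Set (ERule α)) (s t : Term α) : Prop :=
  ∃ P, ParStep R P s t

/-- Parallel reduction where every contracted position is at or below a position of `Q`. -/
def ParRedBelow {α : Type u} (R : Set (ERule α)) (Q : Set Pos) (s t : Term α) : Prop :=
  ∃ P, ParStep R P s t ∧ ∀ p ∈ P, ∃ q ∈ Q, q <+: p

/-- `n`-fold composition of a relation. -/
def NFold {β : Type*} (r : β → β → Prop) : ℕ → β → β → Prop
  | 0 => Eq
  | n + 1 => fun a c => ∃ b, r a b ∧ NFold r n b c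

/-- The update of the set of basic positions w.r.t. extra variables after a rewrite step
at position `p` with rule `l → r`. -/
def nextB {α : Type u} (B : Set Pos) (p : Pos) (l r : Term α) : Set Pos :=
  { q | q ∈ B ∧ ¬ p <+: q }
  ∪ { q | ∃ q' ∈ PosF r, q = p ++ q' }
  ∪ { q | ∃ pv p' q', pv ∈ PosV l ∧ Term.sub? pv l = Term.sub? p' r ∧
        (p ++ pv ++ q') ∈ B ∧ q = p ++ p' ++ q' }

/-- Reduction sequences of an eTRS based on a set `B` of positions w.r.t. extra
variables, where additionally every term substituted for an extra variable of the
applied rule satisfies `T` (EV-instantiation on `T`). -/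
inductive EVSeq {α : Type u} (R : Set (ERule α)) (T : Term α → Prop) :
    Set Pos → Term α → Term α → Prop
  | refl (B : Set Pos) (t : Term α) : EVSeq R T B t t
  | step {B : Set Pos} {s s' t : Term α} (p : Pos) (ρ : ERule α) (σ : ℕ → Term α) :
      ρ ∈ R → ρ.conds = [] →
      Term.sub? p s = some (ρ.lhs.subst σ) →
      s' = Term.replaceAt (ρ.rhs.subst σ) p s →
      p ∈ B →
      (∀ x ∈ ρ.extraVars, T (σ x)) →
      EVSeq R T (nextB B p ρ.lhs ρ.rhs) s' t →
      EVSeq R T B s t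

/-- An EV-safe reduction sequence `s ↪*_R t`, EV-instantiated on `T`. -/
def EVSafeI {α : Type u} (R : Set (ERule α)) (T : Term α → Prop) (s t : Term α) : Prop :=
  EVSeq R T (PosF s) s t

/-- An EV-safe reduction sequence `s ↪*_R t`. -/
def EVSafe {α : Type u} (R : Set (ERule α)) (s t : Term α) : Prop :=
  EVSeq R (fun _ => True) (PosF s) s t

/-! ## Tree homomorphisms -/

/-- Applying the tree homomorphism determined by `h` to a term:
`φ(f(t₁, …, t_n)) = h(f){xᵢ ↦ φ(tᵢ)}` (the formal variable `xᵢ` is the variable `i - 1`). -/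
def applyHom {α : Type u} (h : α → Term α) : Term α → Term α
  | .var x => .var x
  | .app f ts =>
      Term.subst (fun i => (ts.attach.map (fun s => applyHom h s.1)).getD i (Term.var i)) (h f)
decreasing_by
  simp only [Term.app.sizeOf_spec]
  have := List.sizeOf_lt_of_mem s.2
  omega

/-- The image of a rule under a tree homomorphism. -/
def homRule {α : Type u} (h : α → Term α) (ρ : ERule α) : ERule α :=
  ⟨applyHom h ρ.lhs, applyHom h ρ.rhs,
    ρ.conds.map (fun c => (applyHom h c.1, applyHom h c.2))⟩

/-- The image of an eCTRS under a tree homomorphism. -/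
def homSys {α : Type u} (h : α → Term α) (R : Set (ERule α)) : Set (ERule α) :=
  homRule h '' R

/-- `h` determines a tree homomorphism from `T(G₁,V)` to `T(G₂,V)` (w.r.t. arity `ar`):
for `f ∈ G₁` of arity `n`, `h f` is a term over `G₂` with variables among `x₁, …, x_n`. -/
def TreeHom {α : Type u} (ar : α → ℕ) (G₁ G₂ : Set α) (h : α → Term α) : Prop :=
  ∀ f ∈ G₁, (h f).overSig G₂ ∧ ∀ x ∈ (h f).varList, x < ar f

/-- `F`-identical tree homomorphism. -/
def FIdentical {α : Type u} (ar : α → ℕ) (F : Set α) (h : α → Term α) : Prop :=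
  ∀ f ∈ F, h f = Term.app f ((List.range (ar f)).map Term.var)

/-- Non-erasing tree homomorphism (on the signature `G`). -/
def HomNonErasing {α : Type u} (ar : α → ℕ) (G : Set α) (h : α → Term α) : Prop :=
  ∀ f ∈ G, (h f).varFinset = Finset.range (ar f)

/-- The homomorphism is EV-preserving for the eTRS `S`. -/
def EVPreserving {α : Type u} (h : α → Term α) (S : Set (ERule α)) : Prop :=
  ∀ ρ ∈ S, (homRule h ρ).extraVars = ρ.extraVars

/-! ## Unravelings for join and normal CTRSs, and `Norm` -/

/-- Marchiori-style unraveling `U_J` of a join conditional rule. -/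
def unravelJ {α : Type u} (uj : ERule α → α) (ρ : ERule α) : List (ERule α) :=
  if ρ.conds.isEmpty then [ρ]
  else
    [ ⟨ρ.lhs,
        Term.app (uj ρ) ((ρ.conds.foldr (fun c acc => c.1 :: c.2 :: acc) []) ++
          (seqOf ρ.lhs.varFinset).map Term.var), []⟩,
      ⟨Term.app (uj ρ)
          (((List.range ρ.conds.length).foldr
              (fun j acc => Term.var (ρ.freshBase + j) :: Term.var (ρ.freshBase + j) :: acc) []) ++
            (seqOf ρ.lhs.varFinset).map Term.var),
        ρ.rhs, []⟩ ]

def UJSys {α : Type u} (uj : ERule α → α) (R : Set (ERule α)) : Set (ERule α) :=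
  { q | ∃ ρ ∈ R, q ∈ unravelJ uj ρ }

/-- Unraveling `U_N` of a normal conditional rule. -/
def unravelN {α : Type u} (un : ERule α → α) (ρ : ERule α) : List (ERule α) :=
  if ρ.conds.isEmpty then [ρ]
  else
    [ ⟨ρ.lhs,
        Term.app (un ρ) (ρ.conds.map Prod.fst ++ (seqOf ρ.lhs.varFinset).map Term.var), []⟩,
      ⟨Term.app (un ρ) (ρ.conds.map Prod.snd ++ (seqOf ρ.lhs.varFinset).map Term.var),
        ρ.rhs, []⟩ ]

def UNSys {α : Type u} (un : ERule α → α) (R : Set (ERule α)) : Set (ERule α) :=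
  { q | ∃ ρ ∈ R, q ∈ unravelN un ρ }

/-- `Norm` on rules: `l → r ⇐ eq(s₁,t₁) ↠ eq(⊤,⊤); …; eq(s_k,t_k) ↠ eq(⊤,⊤)`. -/
def normRule {α : Type u} (eqS topS : α) (ρ : ERule α) : ERule α :=
  ⟨ρ.lhs, ρ.rhs,
    ρ.conds.map (fun c =>
      (Term.app eqS [c.1, c.2], Term.app eqS [Term.app topS [], Term.app topS []]))⟩

/-- `Norm(R) = {eq(x,x) → eq(⊤,⊤)} ∪ {Norm(ρ) | ρ ∈ R}`. -/
def NormSys {α : Type u} (eqS topS : α) (R : Set (ERule α)) : Set (ERule α) :=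
  insert
    ⟨Term.app eqS [Term.var 0, Term.var 0],
      Term.app eqS [Term.app topS [], Term.app topS []], []⟩
    (normRule eqS topS '' R)

/-- A normal CTRS: a deterministic, non-LV CTRS all of whose condition right-hand
sides are ground normal forms w.r.t. `R_u`. -/
def NormalCTRS {α : Type u} (R : Set (ERule α)) : Prop :=
  ∀ ρ ∈ R, ρ.Det ∧ ρ.nonLV ∧ ∀ c ∈ ρ.conds, c.2.Ground ∧ IsNF (Ru R) c.2

/-! ### Auxiliary lemmas for the proof -/

theorem Term.varList_app' {α : Type u} (f : α) (ts : List (Term α)) :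
    (Term.app f ts).varList = ts.foldr (fun t acc => t.varList ++ acc) [] := by
  rw [Term.varList]
  exact List.foldr_attach (f := fun t acc => Term.varList t ++ acc) (b := []) (l := ts)

theorem varList_mkU {α : Type u} (f : α) (t : Term α) (xs : List ℕ) :
    (mkU f t xs).varList = t.varList ++ xs := by
  rw [mkU, Term.varList_app']
  simp only [List.foldr_cons]
  congr 1
  induction xs with
  | nil => simp
  | cons a l ih => simp [Term.varList, ih]

theorem mkU_linear_iff {α : Type u} (f : α) (t : Term α) (s : Finset ℕ) :
    (mkU f t (seqOf s)).Linear ↔ t.Linear ∧ Disjoint t.varFinset s := by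
  rw [Term.Linear, varList_mkU, List.nodup_append]
  have hmem : ∀ x : ℕ, x ∈ seqOf s ↔ x ∈ s := fun x => Finset.mem_sort _
  constructor
  · rintro ⟨h1, _, h3⟩
    refine ⟨h1, Finset.disjoint_left.2 fun x hx hxs => ?_⟩
    have hx' : x ∈ t.varList := by
      simpa [Term.varFinset, List.mem_toFinset] using hx
    exact h3 x hx' x ((hmem x).2 hxs) rfl
  · rintro ⟨h1, h2⟩
    refine ⟨h1, Finset.sort_nodup _ _, fun x hx y hxs hxy => ?_⟩
    have hx' : x ∈ t.varFinset := by
      simpa [Term.varFinset, List.mem_toFinset] using hx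
    exact Finset.disjoint_left.1 h2 hx' ((hmem x).1 (hxy ▸ hxs))

theorem disjoint_Z_iff_X {α : Type u} (ρ : ERule α) (j : ℕ) :
    Disjoint (ρ.conds.getD j junkPair).2.varFinset (ρ.Zset j) ↔
    Disjoint (ρ.conds.getD j junkPair).2.varFinset (ρ.Xset j) := by
  have hsub : (ρ.conds.getD j junkPair).2.varFinset ⊆ ρ.Yset j := by
    rw [ERule.Yset]
    intro x hx
    exact Finset.mem_union_left _ (Finset.mem_union_right _ hx)
  rw [ERule.Zset]
  constructor
  · intro h
    rw [Finset.disjoint_left] at h ⊢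
    intro x hx hxX
    exact h hx (Finset.mem_inter.2 ⟨hxX, hsub hx⟩)
  · intro h
    exact h.mono_right Finset.inter_subset_left

/-- An extended deterministic conditional rewrite rule
`ρ : l → r ⇐ s₁ ↠ t₁; …; s_k ↠ t_k` is ultra-left-linear w.r.t. the optimized
unraveling `U_opt` iff all of `l, t₁, …, t_k` are linear and
`Var(tᵢ) ∩ Xᵢ = ∅` for all `1 ≤ i ≤ k`. -/

theorem uopt_ultraLL_iff {α : Type u} (u : ℕ → α) (ρ : ERule α) (hdet : ρ.Det) :
    (∀ q ∈ unravelOpt u ρ, q.LL) ↔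
      (ρ.lhs.Linear ∧ (∀ c ∈ ρ.conds, c.2.Linear) ∧
        ∀ j < ρ.conds.length,
          Disjoint (ρ.conds.getD j junkPair).2.varFinset (ρ.Xset j)) := by
  have key : (∀ q ∈ unravelOpt u ρ, q.LL) ↔
      (ρ.lhs.Linear ∧ ∀ j < ρ.conds.length,
        ((ρ.conds.getD j junkPair).2.Linear ∧
          Disjoint (ρ.conds.getD j junkPair).2.varFinset (ρ.Zset j))) := by
    rw [unravelOpt, unravelWith]
    constructor
    · intro h
      refine ⟨?_, fun j hj => ?_⟩
      · have := h _ (List.mem_map.2 ⟨0, List.mem_range.2 (by omega), rfl⟩)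
        simpa [ERule.LL] using this
      · have := h _ (List.mem_map.2 ⟨j + 1, List.mem_range.2 (by omega), rfl⟩)
        simp only [ERule.LL, if_neg (by omega : ¬ (j + 1 = 0)), Nat.add_sub_cancel] at this
        exact (mkU_linear_iff _ _ _).1 this
    · rintro ⟨h0, h1⟩ q hq
      rcases List.mem_map.1 hq with ⟨j, hj, rfl⟩
      rw [List.mem_range] at hj
      rcases j with _ | i
      · simpa [ERule.LL] using h0
      · simp only [ERule.LL, if_neg (by omega : ¬ (i + 1 = 0)), Nat.add_sub_cancel]
        exact (mkU_linear_iff _ _ _).2 (h1 i (by omega))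
  rw [key]
  constructor
  · rintro ⟨h0, h1⟩
    refine ⟨h0, fun c hc => ?_, fun j hj => ?_⟩
    · rcases List.mem_iff_getElem.1 hc with ⟨j, hj, rfl⟩
      have := (h1 j hj).1
      rwa [List.getD_eq_getElem _ _ hj] at this
    · exact (disjoint_Z_iff_X ρ j).1 (h1 j hj).2
  · rintro ⟨h0, h1, h2⟩
    refine ⟨h0, fun j hj => ⟨?_, (disjoint_Z_iff_X ρ j).2 (h2 j hj)⟩⟩
    rw [List.getD_eq_getElem _ _ hj]
    exact h1 _ (List.getElem_mem hj)
end

section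
/- Let ρ: l → r ⇐ s_1 ↠ t_1; …; s_k ↠ t_k be an extended deterministic conditional rewrite rule. Then ρ is ultra-non-erasing w.r.t. the optimized unraveling U_opt (i.e., every rule of U_opt(ρ) is non-erasing) if and only if Var(l) ⊆ Var(r, s_1, …, s_k) and Var(t_i) ⊆ Var(r, s_{i+1}, …, s_k) for all 1 ≤ i ≤ k. -/
set_option maxHeartbeats 1000000

universe u

/-- `Var(s_{m+1}, …, s_k)` (0-based: the left-hand sides of the conditions from index `m` on). -/
def sVarsFrom {α : Type u} (ρ : ERule α) (m : ℕ) : Finset ℕ :=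
  ((ρ.conds.drop m).map (fun c => c.1.varFinset)).foldr (· ∪ ·) ∅

/-! ### Auxiliary lemmas for Statement 2 -/

namespace UoptNEAux

variable {α : Type u}

lemma mem_foldr_union {x : ℕ} : ∀ {l : List (Finset ℕ)},
    x ∈ l.foldr (· ∪ ·) ∅ ↔ ∃ s ∈ l, x ∈ s := by
  intro l
  induction l with
  | nil => simp
  | cons a l ih => simp [ih]

lemma varList_app (f : α) (ts : List (Term α)) :
    (Term.app f ts).varList = ts.foldr (fun t acc => t.varList ++ acc) [] := by
  rw [Term.varList]
  exact List.foldr_attach (l := ts) (f := fun t acc => t.varList ++ acc) (b := [])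

lemma varFinset_mkU (f : α) (t : Term α) (xs : List ℕ) :
    (mkU f t xs).varFinset = t.varFinset ∪ xs.toFinset := by
  have h : ∀ ys : List ℕ,
      ((ys.map (Term.var : ℕ → Term α)).foldr (fun t acc => t.varList ++ acc) []) = ys := by
    intro ys
    induction ys with
    | nil => rfl
    | cons y ys ih => simp [Term.varList, ih]
  simp [mkU, Term.varFinset, varList_app, h]

lemma toFinset_seqOf (s : Finset ℕ) : (seqOf s).toFinset = s := by
  simpa [seqOf] using Finset.sort_toFinset (· ≤ ·) s

lemma mem_Xset {ρ : ERule α} {j x : ℕ} :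
    x ∈ ρ.Xset j ↔ x ∈ ρ.lhs.varFinset ∨
      ∃ i, i < j ∧ i < ρ.conds.length ∧ x ∈ (ρ.conds.getD i junkPair).2.varFinset := by
  unfold ERule.Xset
  rw [Finset.mem_union, mem_foldr_union]
  constructor
  · rintro (h | ⟨s, hs, hx⟩)
    · exact Or.inl h
    · rcases List.mem_map.1 hs with ⟨c, hc, rfl⟩
      rcases List.mem_iff_getElem.1 hc with ⟨i, hi, rfl⟩
      have hlen : i < ρ.conds.length := by
        have := hi; simp [List.length_take] at this; omega
      have hij : i < j := by
        have := hi; simp [List.length_take] at this; omega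
      refine Or.inr ⟨i, hij, hlen, ?_⟩
      rwa [List.getD_eq_getElem _ _ hlen, ← List.getElem_take]
  · rintro (h | ⟨i, hij, hlen, hx⟩)
    · exact Or.inl h
    · refine Or.inr ⟨(ρ.conds.getD i junkPair).2.varFinset, ?_, hx⟩
      refine List.mem_map.2 ⟨ρ.conds.getD i junkPair, ?_, rfl⟩
      refine List.mem_iff_getElem.2 ⟨i, ?_, ?_⟩
      · simp [List.length_take]; omega
      · rw [List.getElem_take, List.getD_eq_getElem _ _ hlen]

lemma mem_Yset {ρ : ERule α} {j x : ℕ} :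
    x ∈ ρ.Yset j ↔ x ∈ ρ.rhs.varFinset ∨
      x ∈ (ρ.conds.getD j junkPair).2.varFinset ∨
      ∃ i, j + 1 ≤ i ∧ i < ρ.conds.length ∧
        (x ∈ (ρ.conds.getD i junkPair).1.varFinset ∨
          x ∈ (ρ.conds.getD i junkPair).2.varFinset) := by
  unfold ERule.Yset
  rw [Finset.mem_union, Finset.mem_union, mem_foldr_union]
  constructor
  · rintro ((h | h) | ⟨s, hs, hx⟩)
    · exact Or.inl h
    · exact Or.inr (Or.inl h)
    · rcases List.mem_map.1 hs with ⟨c, hc, rfl⟩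
      rcases List.mem_iff_getElem.1 hc with ⟨i, hi, rfl⟩
      have hlen : j + 1 + i < ρ.conds.length := by
        have := hi; simp [List.length_drop] at this; omega
      refine Or.inr (Or.inr ⟨j + 1 + i, by omega, hlen, ?_⟩)
      rw [List.getD_eq_getElem _ _ hlen]
      simpa [Finset.mem_union] using hx
  · rintro (h | h | ⟨i, hij, hlen, hx⟩)
    · exact Or.inl (Or.inl h)
    · exact Or.inl (Or.inr h)
    · refine Or.inr ⟨(ρ.conds.getD i junkPair).1.varFinset ∪
        (ρ.conds.getD i junkPair).2.varFinset, ?_, Finset.mem_union.2 hx⟩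
      refine List.mem_map.2 ⟨ρ.conds.getD i junkPair, ?_, rfl⟩
      refine List.mem_iff_getElem.2 ⟨i - (j + 1), ?_, ?_⟩
      · simp [List.length_drop]; omega
      · have hh : j + 1 + (i - (j + 1)) = i := by omega
        rw [List.getElem_drop, ← List.getD_eq_getElem ρ.conds junkPair (by omega), hh]

lemma mem_sVarsFrom {ρ : ERule α} {m x : ℕ} :
    x ∈ sVarsFrom ρ m ↔ ∃ i, m ≤ i ∧ i < ρ.conds.length ∧
      x ∈ (ρ.conds.getD i junkPair).1.varFinset := by
  unfold sVarsFrom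
  rw [mem_foldr_union]
  constructor
  · rintro ⟨s, hs, hx⟩
    rcases List.mem_map.1 hs with ⟨c, hc, rfl⟩
    rcases List.mem_iff_getElem.1 hc with ⟨i, hi, rfl⟩
    have hlen : m + i < ρ.conds.length := by
      have := hi; simp [List.length_drop] at this; omega
    refine ⟨m + i, by omega, hlen, ?_⟩
    rw [List.getD_eq_getElem _ _ hlen]
    simpa using hx
  · rintro ⟨i, hmi, hlen, hx⟩
    refine ⟨(ρ.conds.getD i junkPair).1.varFinset, ?_, hx⟩
    refine List.mem_map.2 ⟨ρ.conds.getD i junkPair, ?_, rfl⟩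
    refine List.mem_iff_getElem.2 ⟨i - m, ?_, ?_⟩
    · simp [List.length_drop]; omega
    · have hh : m + (i - m) = i := by omega
      rw [List.getElem_drop, ← List.getD_eq_getElem ρ.conds junkPair (by omega), hh]

lemma mem_Zset {ρ : ERule α} {j x : ℕ} :
    x ∈ ρ.Zset j ↔ x ∈ ρ.Xset j ∧ x ∈ ρ.Yset j := Finset.mem_inter

lemma unravelOpt_NE_iff (u : ℕ → α) (ρ : ERule α) :
    (∀ q ∈ unravelOpt u ρ, q.NE) ↔
      ∀ j ≤ ρ.conds.length,
        (if j = 0 then ρ.lhs.varFinset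
         else (ρ.conds.getD (j-1) junkPair).2.varFinset ∪ ρ.Zset (j-1)) ⊆
        (if j < ρ.conds.length then
           (ρ.conds.getD j junkPair).1.varFinset ∪ ρ.Zset j
         else ρ.rhs.varFinset) := by
  simp only [unravelOpt, unravelWith, List.mem_map, List.mem_range]
  constructor
  · intro h j hj
    have := h _ ⟨j, by omega, rfl⟩
    unfold ERule.NE at this
    simpa only [apply_ite Term.varFinset, varFinset_mkU, toFinset_seqOf] using this
  · intro h q hq
    rcases hq with ⟨j, hj, rfl⟩
    have := h j (by omega)
    unfold ERule.NE
    simpa only [apply_ite Term.varFinset, varFinset_mkU, toFinset_seqOf] using this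

end UoptNEAux

/-- An extended deterministic conditional rewrite rule
`ρ : l → r ⇐ s₁ ↠ t₁; …; s_k ↠ t_k` is ultra-non-erasing w.r.t. the optimized
unraveling `U_opt` iff `Var(l) ⊆ Var(r, s₁, …, s_k)` and
`Var(tᵢ) ⊆ Var(r, s_{i+1}, …, s_k)` for all `1 ≤ i ≤ k`. -/
theorem uopt_ultraNE_iff {α : Type u} (u : ℕ → α) (ρ : ERule α) (hdet : ρ.Det) :
    (∀ q ∈ unravelOpt u ρ, q.NE) ↔
      (ρ.lhs.varFinset ⊆ ρ.rhs.varFinset ∪ sVarsFrom ρ 0 ∧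
        ∀ j < ρ.conds.length,
          (ρ.conds.getD j junkPair).2.varFinset ⊆ ρ.rhs.varFinset ∪ sVarsFrom ρ (j+1)) := by
  clear hdet
  rw [UoptNEAux.unravelOpt_NE_iff]
  constructor
  · -- forward direction
    intro h
    have D : ∀ d j, j < ρ.conds.length → ρ.conds.length - j - 1 = d →
        ∀ x, (x ∈ (ρ.conds.getD j junkPair).2.varFinset ∨ x ∈ ρ.Zset j) →
          x ∈ ρ.rhs.varFinset ∨ ∃ i, j + 1 ≤ i ∧ i < ρ.conds.length ∧
            x ∈ (ρ.conds.getD i junkPair).1.varFinset := by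
      intro d
      induction d with
      | zero =>
        intro j hj hd x hx
        have hne := h (j+1) (by omega)
        rw [if_neg (by omega : ¬ (j + 1 = 0)), if_neg (by omega : ¬ (j + 1 < ρ.conds.length))]
          at hne
        refine Or.inl (hne ?_)
        simp only [Nat.add_sub_cancel, Finset.mem_union]
        exact hx
      | succ d ih =>
        intro j hj hd x hx
        have hjk : j + 1 < ρ.conds.length := by omega
        have hne := h (j+1) (by omega)
        rw [if_neg (by omega : ¬ (j + 1 = 0)), if_pos hjk] at hne
        have hx' : x ∈ (ρ.conds.getD (j+1-1) junkPair).2.varFinset ∪ ρ.Zset (j+1-1) := by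
          simp only [Nat.add_sub_cancel, Finset.mem_union]
          exact hx
        rcases Finset.mem_union.1 (hne hx') with hs | hz
        · exact Or.inr ⟨j+1, le_refl _, hjk, hs⟩
        · rcases ih (j+1) hjk (by omega) x (Or.inr hz) with hr | ⟨i, hi1, hi2, hi3⟩
          · exact Or.inl hr
          · exact Or.inr ⟨i, by omega, hi2, hi3⟩
    have D' : ∀ j, j < ρ.conds.length →
        ∀ x, (x ∈ (ρ.conds.getD j junkPair).2.varFinset ∨ x ∈ ρ.Zset j) →
          x ∈ ρ.rhs.varFinset ∨ ∃ i, j + 1 ≤ i ∧ i < ρ.conds.length ∧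
            x ∈ (ρ.conds.getD i junkPair).1.varFinset :=
      fun j hj => D _ j hj rfl
    constructor
    · intro x hx
      rcases Nat.eq_zero_or_pos ρ.conds.length with hk0 | hk0
      · have hne := h 0 (by omega)
        rw [if_pos rfl, if_neg (by omega : ¬ (0 < ρ.conds.length))] at hne
        exact Finset.mem_union.2 (Or.inl (hne hx))
      · have hne := h 0 (by omega)
        rw [if_pos rfl, if_pos hk0] at hne
        rcases Finset.mem_union.1 (hne hx) with hs | hz
        · exact Finset.mem_union.2
            (Or.inr (UoptNEAux.mem_sVarsFrom.2 ⟨0, by omega, hk0, hs⟩))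
        · rcases D' 0 hk0 x (Or.inr hz) with hr | ⟨i, hi1, hi2, hi3⟩
          · exact Finset.mem_union.2 (Or.inl hr)
          · exact Finset.mem_union.2
              (Or.inr (UoptNEAux.mem_sVarsFrom.2 ⟨i, by omega, hi2, hi3⟩))
    · intro j hj x hx
      rcases D' j hj x (Or.inl hx) with hr | ⟨i, hi1, hi2, hi3⟩
      · exact Finset.mem_union.2 (Or.inl hr)
      · exact Finset.mem_union.2 (Or.inr (UoptNEAux.mem_sVarsFrom.2 ⟨i, hi1, hi2, hi3⟩))
  · -- backward direction
    rintro ⟨hA, hB⟩ j hj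
    rcases Nat.eq_zero_or_pos j with rfl | hj0
    · rw [if_pos rfl]
      rcases Nat.eq_zero_or_pos ρ.conds.length with hk0 | hk0
      · rw [if_neg (by omega : ¬ (0 < ρ.conds.length))]
        intro x hx
        rcases Finset.mem_union.1 (hA hx) with hr | hs
        · exact hr
        · rcases UoptNEAux.mem_sVarsFrom.1 hs with ⟨i, _, hi2, _⟩
          omega
      · rw [if_pos hk0]
        intro x hx
        rcases Finset.mem_union.1 (hA hx) with hr | hs
        · refine Finset.mem_union.2 (Or.inr (UoptNEAux.mem_Zset.2 ⟨?_, ?_⟩))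
          · exact UoptNEAux.mem_Xset.2 (Or.inl hx)
          · exact UoptNEAux.mem_Yset.2 (Or.inl hr)
        · rcases UoptNEAux.mem_sVarsFrom.1 hs with ⟨i, _, hi2, hi3⟩
          rcases Nat.eq_zero_or_pos i with rfl | hi0
          · exact Finset.mem_union.2 (Or.inl hi3)
          · refine Finset.mem_union.2 (Or.inr (UoptNEAux.mem_Zset.2 ⟨?_, ?_⟩))
            · exact UoptNEAux.mem_Xset.2 (Or.inl hx)
            · exact UoptNEAux.mem_Yset.2 (Or.inr (Or.inr ⟨i, by omega, hi2, Or.inl hi3⟩))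
    · obtain ⟨m, rfl⟩ : ∃ m, j = m + 1 := ⟨j - 1, by omega⟩
      rw [if_neg (by omega : ¬ (m + 1 = 0))]
      simp only [Nat.add_sub_cancel]
      have hmk : m < ρ.conds.length := by omega
      by_cases hjk : m + 1 < ρ.conds.length
      · rw [if_pos hjk]
        -- helper for x ∈ Var(t m)
        have ht : ∀ x, x ∈ (ρ.conds.getD m junkPair).2.varFinset →
            x ∈ (ρ.conds.getD (m+1) junkPair).1.varFinset ∪ ρ.Zset (m+1) := by
          intro x hx
          rcases Finset.mem_union.1 (hB m hmk hx) with hr | hs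
          · refine Finset.mem_union.2 (Or.inr (UoptNEAux.mem_Zset.2 ⟨?_, ?_⟩))
            · exact UoptNEAux.mem_Xset.2 (Or.inr ⟨m, by omega, hmk, hx⟩)
            · exact UoptNEAux.mem_Yset.2 (Or.inl hr)
          · rcases UoptNEAux.mem_sVarsFrom.1 hs with ⟨i, hi1, hi2, hi3⟩
            rcases eq_or_lt_of_le hi1 with rfl | hi1'
            · exact Finset.mem_union.2 (Or.inl hi3)
            · refine Finset.mem_union.2 (Or.inr (UoptNEAux.mem_Zset.2 ⟨?_, ?_⟩))
              · exact UoptNEAux.mem_Xset.2 (Or.inr ⟨m, by omega, hmk, hx⟩)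
              · exact UoptNEAux.mem_Yset.2 (Or.inr (Or.inr ⟨i, by omega, hi2, Or.inl hi3⟩))
        intro x hx
        rcases Finset.mem_union.1 hx with hx | hx
        · exact ht x hx
        · rcases UoptNEAux.mem_Zset.1 hx with ⟨hX, hY⟩
          have hX' : x ∈ ρ.Xset (m+1) := by
            rcases UoptNEAux.mem_Xset.1 hX with hl | ⟨i, hi1, hi2, hi3⟩
            · exact UoptNEAux.mem_Xset.2 (Or.inl hl)
            · exact UoptNEAux.mem_Xset.2 (Or.inr ⟨i, by omega, hi2, hi3⟩)
          rcases UoptNEAux.mem_Yset.1 hY with hr | hmid | ⟨i, hi1, hi2, hi3⟩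
          · exact Finset.mem_union.2 (Or.inr (UoptNEAux.mem_Zset.2
              ⟨hX', UoptNEAux.mem_Yset.2 (Or.inl hr)⟩))
          · exact ht x hmid
          · rcases eq_or_lt_of_le hi1 with rfl | hi1'
            · rcases hi3 with hs | htt
              · exact Finset.mem_union.2 (Or.inl hs)
              · exact Finset.mem_union.2 (Or.inr (UoptNEAux.mem_Zset.2
                  ⟨hX', UoptNEAux.mem_Yset.2 (Or.inr (Or.inl htt))⟩))
            · exact Finset.mem_union.2 (Or.inr (UoptNEAux.mem_Zset.2
                ⟨hX', UoptNEAux.mem_Yset.2 (Or.inr (Or.inr ⟨i, by omega, hi2, hi3⟩))⟩))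
      · rw [if_neg hjk]
        -- last rule : j = k
        have ht : ∀ x, x ∈ (ρ.conds.getD m junkPair).2.varFinset → x ∈ ρ.rhs.varFinset := by
          intro x hx
          rcases Finset.mem_union.1 (hB m hmk hx) with hr | hs
          · exact hr
          · rcases UoptNEAux.mem_sVarsFrom.1 hs with ⟨i, hi1, hi2, _⟩
            omega
        intro x hx
        rcases Finset.mem_union.1 hx with hx | hx
        · exact ht x hx
        · rcases UoptNEAux.mem_Zset.1 hx with ⟨_, hY⟩
          rcases UoptNEAux.mem_Yset.1 hY with hr | hmid | ⟨i, hi1, hi2, _⟩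
          · exact hr
          · exact ht x hmid
          · omega
end

section
/- Let R be an eDCTRS. Then: (1) R is U_opt-NE if and only if (R)^{-1} is a 3-eDCTRS; (2) if R is U_opt-NE, then (a) U_opt((R)^{-1}) = (U_opt(R))^{-1} up to renaming of U symbols (namely under the identification U^ρ_i = U^{(ρ)^{-1}}_{k−i+1} for each rule ρ with k conditions and 1 ≤ i ≤ k), (b) R is U_opt-LL if and only if (R)^{-1} is U_opt-RL, and (c) R is U_opt-RL if and only if (R)^{-1} is U_opt-LL; (3) R is non-LV if and only if (R)^{-1} is non-RV; (4) R is non-RV if and only if (R)^{-1} is non-LV. -/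
set_option maxHeartbeats 1000000

universe u

/-! ### Auxiliary development for `uopt_inv_duality` -/

namespace InvAux

variable {α : Type u}

/-- Variables of `sᵢ`. -/
def Sv (ρ : ERule α) (i : ℕ) : Finset ℕ := (ρ.conds.getD i junkPair).1.varFinset
/-- Variables of `tᵢ`. -/
def Tv (ρ : ERule α) (i : ℕ) : Finset ℕ := (ρ.conds.getD i junkPair).2.varFinset

lemma mem_foldr_union_map {β : Type*} {l : List β} {f : β → Finset ℕ} {x : ℕ} :
    x ∈ (l.map f).foldr (· ∪ ·) ∅ ↔ ∃ c ∈ l, x ∈ f c := by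
  induction l with
  | nil => simp
  | cons a l ih => simp [ih]

lemma exists_mem_iff_getD {β : Type*} {l : List β} {d : β} {P : β → Prop} :
    (∃ c ∈ l, P c) ↔ ∃ i, i < l.length ∧ P (l.getD i d) := by
  constructor
  · rintro ⟨c, hc, hP⟩
    obtain ⟨i, hi, rfl⟩ := List.mem_iff_getElem.mp hc
    exact ⟨i, hi, by rwa [List.getD_eq_getElem _ _ hi]⟩
  · rintro ⟨i, hi, hP⟩
    refine ⟨l.getD i d, ?_, hP⟩
    rw [List.getD_eq_getElem _ _ hi]
    exact List.getElem_mem hi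

lemma getD_take {β : Type*} {l : List β} {d : β} {i j : ℕ} (h : i < j) :
    (l.take j).getD i d = l.getD i d := by
  simp [List.getD_eq_getElem?_getD, List.getElem?_take, h]

lemma getD_drop {β : Type*} {l : List β} {d : β} {i j : ℕ} :
    (l.drop j).getD i d = l.getD (j + i) d := by
  rw [List.getD_eq_getElem?_getD, List.getD_eq_getElem?_getD, List.getElem?_drop]

lemma mem_Xset {ρ : ERule α} {j x} :
    x ∈ ρ.Xset j ↔ x ∈ ρ.lhs.varFinset ∨
      ∃ i, i < j ∧ i < ρ.conds.length ∧ x ∈ Tv ρ i := by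
  unfold ERule.Xset
  rw [Finset.mem_union, mem_foldr_union_map,
    exists_mem_iff_getD (d := junkPair)]
  apply or_congr_right
  constructor
  · rintro ⟨i, hi, hx⟩
    rw [List.length_take] at hi
    exact ⟨i, by omega, by omega, by rwa [Tv, ← getD_take (show i < j by omega)]⟩
  · rintro ⟨i, hij, hik, hx⟩
    exact ⟨i, by rw [List.length_take]; omega, by rwa [getD_take hij]⟩

lemma mem_Yset {ρ : ERule α} {j x} :
    x ∈ ρ.Yset j ↔ x ∈ ρ.rhs.varFinset ∨ x ∈ Tv ρ j ∨
      ∃ i, j < i ∧ i < ρ.conds.length ∧ (x ∈ Sv ρ i ∨ x ∈ Tv ρ i) := by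
  unfold ERule.Yset Tv Sv
  rw [Finset.mem_union, Finset.mem_union, mem_foldr_union_map,
    exists_mem_iff_getD (d := junkPair), or_assoc]
  apply or_congr_right
  apply or_congr_right
  constructor
  · rintro ⟨i, hi, hx⟩
    rw [List.length_drop] at hi
    rw [getD_drop] at hx
    exact ⟨j + 1 + i, by omega, by omega, by simpa [Finset.mem_union] using hx⟩
  · rintro ⟨i, hji, hik, hx⟩
    refine ⟨i - (j + 1), by rw [List.length_drop]; omega, ?_⟩
    rw [getD_drop, show j + 1 + (i - (j + 1)) = i by omega]
    simpa [Finset.mem_union] using hx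

lemma inv_lhs (ρ : ERule α) : ρ.inv.lhs = ρ.rhs := rfl
lemma inv_rhs (ρ : ERule α) : ρ.inv.rhs = ρ.lhs := rfl

lemma inv_conds_length (ρ : ERule α) : ρ.inv.conds.length = ρ.conds.length := by
  simp [ERule.inv]

lemma inv_conds_getD {ρ : ERule α} {i} (h : i < ρ.conds.length) :
    ρ.inv.conds.getD i junkPair =
      ((ρ.conds.getD (ρ.conds.length - 1 - i) junkPair).2,
       (ρ.conds.getD (ρ.conds.length - 1 - i) junkPair).1) := by
  have h1 : i < ρ.inv.conds.length := by rwa [inv_conds_length]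
  rw [List.getD_eq_getElem _ _ h1]
  show ((ρ.conds.map fun c => (c.2, c.1)).reverse)[i]'(by simpa using h) = _
  rw [List.getElem_reverse, List.getElem_map,
    List.getD_eq_getElem _ _ (show ρ.conds.length - 1 - i < ρ.conds.length by omega)]
  congr 2 <;> simp

lemma Sv_inv {ρ : ERule α} {i} (h : i < ρ.conds.length) :
    Sv ρ.inv i = Tv ρ (ρ.conds.length - 1 - i) := by
  unfold Sv Tv
  rw [inv_conds_getD h]

lemma Tv_inv {ρ : ERule α} {i} (h : i < ρ.conds.length) :
    Tv ρ.inv i = Sv ρ (ρ.conds.length - 1 - i) := by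
  unfold Sv Tv
  rw [inv_conds_getD h]

lemma mem_Xset_inv {ρ : ERule α} {j x} (hj : j ≤ ρ.conds.length) :
    x ∈ ρ.inv.Xset j ↔ x ∈ ρ.rhs.varFinset ∨
      ∃ m, ρ.conds.length - j ≤ m ∧ m < ρ.conds.length ∧ x ∈ Sv ρ m := by
  rw [mem_Xset]
  apply or_congr Iff.rfl
  constructor
  · rintro ⟨i, hij, hik, hx⟩
    rw [inv_conds_length] at hik
    rw [Tv_inv hik] at hx
    exact ⟨ρ.conds.length - 1 - i, by omega, by omega, hx⟩
  · rintro ⟨m, hm1, hm2, hx⟩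
    refine ⟨ρ.conds.length - 1 - m, by omega, by rw [inv_conds_length]; omega, ?_⟩
    rw [Tv_inv (show ρ.conds.length - 1 - m < ρ.conds.length by omega),
      show ρ.conds.length - 1 - (ρ.conds.length - 1 - m) = m by omega]
    exact hx

lemma mem_Yset_inv {ρ : ERule α} {j x} (hj : j < ρ.conds.length) :
    x ∈ ρ.inv.Yset j ↔ x ∈ ρ.lhs.varFinset ∨ x ∈ Sv ρ (ρ.conds.length - 1 - j) ∨
      ∃ m, m < ρ.conds.length - 1 - j ∧ (x ∈ Tv ρ m ∨ x ∈ Sv ρ m) := by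
  rw [mem_Yset, Tv_inv hj]
  apply or_congr Iff.rfl
  apply or_congr Iff.rfl
  constructor
  · rintro ⟨i, hji, hik, hx⟩
    rw [inv_conds_length] at hik
    rw [Sv_inv hik, Tv_inv hik] at hx
    exact ⟨ρ.conds.length - 1 - i, by omega, by tauto⟩
  · rintro ⟨m, hm, hx⟩
    refine ⟨ρ.conds.length - 1 - m, by omega, by rw [inv_conds_length]; omega, ?_⟩
    rw [Sv_inv (show ρ.conds.length - 1 - m < ρ.conds.length by omega),
      Tv_inv (show ρ.conds.length - 1 - m < ρ.conds.length by omega),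
      show ρ.conds.length - 1 - (ρ.conds.length - 1 - m) = m by omega]
    tauto

/-! ### Unraveled rules -/

lemma varList_var (x : ℕ) : (Term.var x : Term α).varList = [x] := by
  simp [Term.varList]

lemma varList_app (f : α) (ts : List (Term α)) :
    (Term.app f ts).varList = ts.foldr (fun t acc => t.varList ++ acc) [] := by
  rw [Term.varList]
  exact List.foldr_attach (l := ts) (f := fun t acc => t.varList ++ acc) (b := [])

lemma varFinset_mkU (f : α) (t : Term α) (xs : List ℕ) :
    (mkU f t xs).varFinset = t.varFinset ∪ xs.toFinset := by
  have h : ∀ ys : List ℕ,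
      (ys.map (Term.var : ℕ → Term α)).foldr (fun t acc => t.varList ++ acc) [] = ys := by
    intro ys
    induction ys with
    | nil => rfl
    | cons a ys ih => simp [varList_var, ih]
  simp [mkU, Term.varFinset, varList_app, h]

lemma toFinset_seqOf (s : Finset ℕ) : (seqOf s).toFinset = s :=
  Finset.sort_toFinset _ _

/-- The `j`-th rule of the optimized unraveling. -/
def ruleOpt (u : ℕ → α) (ρ : ERule α) (j : ℕ) : ERule α :=
  ⟨ if j = 0 then ρ.lhs
      else mkU (u (j-1)) (ρ.conds.getD (j-1) junkPair).2 (seqOf (ρ.Zset (j-1))),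
    if j < ρ.conds.length then mkU (u j) (ρ.conds.getD j junkPair).1 (seqOf (ρ.Zset j))
      else ρ.rhs,
    [] ⟩

lemma mem_unravelOpt {u : ℕ → α} {ρ : ERule α} {q} :
    q ∈ unravelOpt u ρ ↔ ∃ j, j ≤ ρ.conds.length ∧ q = ruleOpt u ρ j := by
  simp only [unravelOpt, unravelWith, List.mem_map, List.mem_range, Nat.lt_succ_iff]
  constructor
  · rintro ⟨j, hj, rfl⟩; exact ⟨j, hj, rfl⟩
  · rintro ⟨j, hj, rfl⟩; exact ⟨j, hj, rfl⟩

lemma NE_ruleOpt_iff {u : ℕ → α} {ρ : ERule α} {j} :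
    (ruleOpt u ρ j).NE ↔
      ((if j = 0 then ρ.lhs.varFinset else Tv ρ (j-1) ∪ ρ.Zset (j-1)) ⊆
       (if j < ρ.conds.length then Sv ρ j ∪ ρ.Zset j else ρ.rhs.varFinset)) := by
  simp only [ERule.NE, ruleOpt, Sv, Tv]
  split <;> split <;> simp [varFinset_mkU, toFinset_seqOf]

section

variable {u : ℕ → α} {ρ : ERule α}

lemma hNE_last (hNE : ∀ j ≤ ρ.conds.length, (ruleOpt u ρ j).NE)
    (hk : 0 < ρ.conds.length) :
    Tv ρ (ρ.conds.length - 1) ∪ ρ.Zset (ρ.conds.length - 1) ⊆ ρ.rhs.varFinset := by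
  have h := NE_ruleOpt_iff.mp (hNE ρ.conds.length le_rfl)
  rwa [if_neg (by omega), if_neg (by omega)] at h

lemma hNE_mid (hNE : ∀ j ≤ ρ.conds.length, (ruleOpt u ρ j).NE)
    {m} (hm : m + 1 < ρ.conds.length) :
    Tv ρ m ∪ ρ.Zset m ⊆ Sv ρ (m+1) ∪ ρ.Zset (m+1) := by
  have h := NE_ruleOpt_iff.mp (hNE (m+1) (by omega))
  rw [if_neg (by omega), if_pos hm] at h
  simpa using h

lemma hNE_zero (hNE : ∀ j ≤ ρ.conds.length, (ruleOpt u ρ j).NE)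
    (hk : 0 < ρ.conds.length) :
    ρ.lhs.varFinset ⊆ Sv ρ 0 ∪ ρ.Zset 0 := by
  have h := NE_ruleOpt_iff.mp (hNE 0 (by omega))
  rwa [if_pos rfl, if_pos hk] at h

lemma hNE_zero' (hNE : ∀ j ≤ ρ.conds.length, (ruleOpt u ρ j).NE)
    (hk : ρ.conds.length = 0) :
    ρ.lhs.varFinset ⊆ ρ.rhs.varFinset := by
  have h := NE_ruleOpt_iff.mp (hNE 0 (by omega))
  rwa [if_pos rfl, if_neg (by omega)] at h

lemma lemA (hNE : ∀ j ≤ ρ.conds.length, (ruleOpt u ρ j).NE) :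
    ∀ d m, m + d + 1 = ρ.conds.length →
      ∀ x, (x ∈ Tv ρ m ∨ x ∈ ρ.Zset m) →
        x ∈ ρ.rhs.varFinset ∨ ∃ i, m < i ∧ i < ρ.conds.length ∧ x ∈ Sv ρ i := by
  intro d
  induction d with
  | zero =>
    intro m hm x hx
    left
    apply hNE_last hNE (by omega)
    rw [show ρ.conds.length - 1 = m by omega]
    exact Finset.mem_union.mpr hx
  | succ d ih =>
    intro m hm x hx
    have h := hNE_mid hNE (m := m) (by omega) (Finset.mem_union.mpr hx)
    rcases Finset.mem_union.mp h with h1 | h1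
    · exact Or.inr ⟨m+1, by omega, by omega, h1⟩
    · rcases ih (m+1) (by omega) x (Or.inr h1) with h2 | ⟨i, hi1, hi2, hx2⟩
      · exact Or.inl h2
      · exact Or.inr ⟨i, by omega, hi2, hx2⟩

lemma lemA' (hNE : ∀ j ≤ ρ.conds.length, (ruleOpt u ρ j).NE)
    {m} (hm : m < ρ.conds.length) {x} (hx : x ∈ Tv ρ m ∨ x ∈ ρ.Zset m) :
    x ∈ ρ.rhs.varFinset ∨ ∃ i, m < i ∧ i < ρ.conds.length ∧ x ∈ Sv ρ i :=
  lemA hNE (ρ.conds.length - 1 - m) m (by omega) x hx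

lemma Zset_inv (hdet : ρ.Det) (hNE : ∀ j ≤ ρ.conds.length, (ruleOpt u ρ j).NE)
    {j} (hj : j < ρ.conds.length) :
    ρ.inv.Zset j = ρ.Zset (ρ.conds.length - 1 - j) := by
  have hdetP : ∀ i, i < ρ.conds.length → ∀ {x}, x ∈ Sv ρ i →
      x ∈ ρ.lhs.varFinset ∨ ∃ i', i' < i ∧ i' < ρ.conds.length ∧ x ∈ Tv ρ i' :=
    fun i hi x hx => mem_Xset.mp (hdet i hi hx)
  ext x
  show x ∈ ρ.inv.Xset j ∩ ρ.inv.Yset j ↔ x ∈ ρ.Xset _ ∩ ρ.Yset _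
  rw [Finset.mem_inter, Finset.mem_inter, mem_Xset_inv (le_of_lt hj), mem_Yset_inv hj,
    mem_Xset, mem_Yset]
  constructor
  · rintro ⟨hX', hY'⟩
    constructor
    · rcases hY' with h | h | ⟨m, hm, h | h⟩
      · exact Or.inl h
      · rcases hdetP _ (by omega) h with h1 | ⟨i, hi1, hi2, hx1⟩
        · exact Or.inl h1
        · exact Or.inr ⟨i, hi1, hi2, hx1⟩
      · exact Or.inr ⟨m, hm, by omega, h⟩
      · rcases hdetP m (by omega) h with h1 | ⟨i, hi1, hi2, hx1⟩
        · exact Or.inl h1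
        · exact Or.inr ⟨i, by omega, hi2, hx1⟩
    · rcases hX' with h | ⟨m, hm1, hm2, h⟩
      · exact Or.inl h
      · exact Or.inr (Or.inr ⟨m, by omega, hm2, Or.inl h⟩)
  · rintro ⟨hX, hY⟩
    constructor
    · rcases hY with h | h | ⟨m, hm1, hm2, h | h⟩
      · exact Or.inl h
      · rcases lemA' hNE (show ρ.conds.length - 1 - j < ρ.conds.length by omega)
            (Or.inl h) with h1 | ⟨i, hi1, hi2, hx1⟩
        · exact Or.inl h1
        · exact Or.inr ⟨i, by omega, hi2, hx1⟩
      · exact Or.inr ⟨m, by omega, hm2, h⟩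
      · have hXm : x ∈ ρ.Xset m := mem_Xset.mpr (by
          rcases hX with h1 | ⟨i, hi1, hi2, hx1⟩
          · exact Or.inl h1
          · exact Or.inr ⟨i, by omega, hi2, hx1⟩)
        have hYm : x ∈ ρ.Yset m := mem_Yset.mpr (Or.inr (Or.inl h))
        rcases lemA' hNE hm2 (Or.inr (Finset.mem_inter.mpr ⟨hXm, hYm⟩))
          with h1 | ⟨i, hi1, hi2, hx1⟩
        · exact Or.inl h1
        · exact Or.inr ⟨i, by omega, hi2, hx1⟩
    · rcases hX with h | ⟨i, hi1, hi2, hx1⟩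
      · exact Or.inl h
      · exact Or.inr (Or.inr ⟨i, hi1, Or.inl hx1⟩)

lemma invDet (hdet : ρ.Det) (hNE : ∀ j ≤ ρ.conds.length, (ruleOpt u ρ j).NE) :
    ρ.inv.Det := by
  intro j hj x hx
  rw [inv_conds_length] at hj
  have hx' : x ∈ Tv ρ (ρ.conds.length - 1 - j) := by
    rw [← Sv_inv hj]; exact hx
  rw [mem_Xset_inv (le_of_lt hj)]
  rcases lemA' hNE (show ρ.conds.length - 1 - j < ρ.conds.length by omega)
      (Or.inl hx') with h | ⟨i, hi1, hi2, hx1⟩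
  · exact Or.inl h
  · exact Or.inr ⟨i, by omega, hi2, hx1⟩

lemma mem_invCondsUnion {ρ : ERule α} {x i} (hi : i < ρ.conds.length)
    (hx : x ∈ Sv ρ i ∨ x ∈ Tv ρ i) :
    x ∈ (ρ.inv.conds.map (fun c => c.1.varFinset ∪ c.2.varFinset)).foldr (· ∪ ·) ∅ := by
  rw [mem_foldr_union_map, exists_mem_iff_getD (d := junkPair)]
  refine ⟨ρ.conds.length - 1 - i, by rw [inv_conds_length]; omega, ?_⟩
  rw [inv_conds_getD (show ρ.conds.length - 1 - i < ρ.conds.length by omega),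
    show ρ.conds.length - 1 - (ρ.conds.length - 1 - i) = i by omega]
  simp only [Finset.mem_union]
  simp only [Sv, Tv] at hx
  tauto

lemma invType3 (hdet : ρ.Det) (hNE : ∀ j ≤ ρ.conds.length, (ruleOpt u ρ j).NE) :
    ρ.inv.Type3 := by
  intro x hx
  rw [Finset.mem_union]
  by_cases hk : ρ.conds.length = 0
  · exact Or.inl (hNE_zero' hNE hk hx)
  · rcases Finset.mem_union.mp (hNE_zero hNE (by omega) hx) with h | h
    · exact Or.inr (mem_invCondsUnion (by omega) (Or.inl h))
    · have hY : x ∈ ρ.Yset 0 := (Finset.mem_inter.mp h).2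
      rcases mem_Yset.mp hY with h1 | h1 | ⟨i, hi1, hi2, h1⟩
      · exact Or.inl h1
      · exact Or.inr (mem_invCondsUnion (by omega) (Or.inr h1))
      · exact Or.inr (mem_invCondsUnion hi2 h1)

lemma NE_ruleOpt_of_inv (hdet : ρ.Det) (hD : ρ.inv.Det) (hT : ρ.inv.Type3) :
    ∀ j ≤ ρ.conds.length, (ruleOpt u ρ j).NE := by
  have hDp : ∀ m, m < ρ.conds.length → ∀ {x}, x ∈ Tv ρ m →
      x ∈ ρ.rhs.varFinset ∨ ∃ i, m < i ∧ i < ρ.conds.length ∧ x ∈ Sv ρ i := by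
    intro m hm x hx
    have hj : ρ.conds.length - 1 - m < ρ.inv.conds.length := by
      rw [inv_conds_length]; omega
    have hx' : x ∈ Sv ρ.inv (ρ.conds.length - 1 - m) := by
      rw [Sv_inv (show ρ.conds.length - 1 - m < ρ.conds.length by omega),
        show ρ.conds.length - 1 - (ρ.conds.length - 1 - m) = m by omega]
      exact hx
    have h2 := hD (ρ.conds.length - 1 - m) hj hx'
    rw [mem_Xset_inv (by omega)] at h2
    rcases h2 with h3 | ⟨i, hi1, hi2, hx2⟩
    · exact Or.inl h3
    · exact Or.inr ⟨i, by omega, hi2, hx2⟩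
  have hTp : ∀ {x}, x ∈ ρ.lhs.varFinset →
      x ∈ ρ.rhs.varFinset ∨ ∃ i, i < ρ.conds.length ∧ (x ∈ Sv ρ i ∨ x ∈ Tv ρ i) := by
    intro x hx
    have h := hT hx
    rcases Finset.mem_union.mp h with h1 | h1
    · exact Or.inl h1
    · rw [mem_foldr_union_map, exists_mem_iff_getD (d := junkPair)] at h1
      obtain ⟨i, hi, hmem⟩ := h1
      rw [inv_conds_length] at hi
      rw [inv_conds_getD hi] at hmem
      rcases Finset.mem_union.mp hmem with h2 | h2
      · exact Or.inr ⟨ρ.conds.length - 1 - i, by omega, Or.inr h2⟩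
      · exact Or.inr ⟨ρ.conds.length - 1 - i, by omega, Or.inl h2⟩
  intro j hj
  rw [NE_ruleOpt_iff]
  by_cases hj0 : j = 0
  · subst hj0
    rw [if_pos rfl]
    by_cases hk : 0 < ρ.conds.length
    · rw [if_pos hk]
      intro x hx
      rw [Finset.mem_union]
      have hX0 : x ∈ ρ.Xset 0 := mem_Xset.mpr (Or.inl hx)
      rcases hTp hx with h | ⟨i, hik, h⟩
      · exact Or.inr (Finset.mem_inter.mpr ⟨hX0, mem_Yset.mpr (Or.inl h)⟩)
      · rcases Nat.eq_zero_or_pos i with rfl | hipos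
        · rcases h with h | h
          · exact Or.inl h
          · exact Or.inr (Finset.mem_inter.mpr ⟨hX0, mem_Yset.mpr (Or.inr (Or.inl h))⟩)
        · exact Or.inr (Finset.mem_inter.mpr
            ⟨hX0, mem_Yset.mpr (Or.inr (Or.inr ⟨i, hipos, hik, h⟩))⟩)
    · rw [if_neg hk]
      intro x hx
      rcases hTp hx with h | ⟨i, hik, _⟩
      · exact h
      · omega
  · rw [if_neg hj0]
    by_cases hjk : j < ρ.conds.length
    · rw [if_pos hjk]
      intro x hx
      have hXj : x ∈ ρ.Xset j := by
        rcases Finset.mem_union.mp hx with h | h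
        · exact mem_Xset.mpr (Or.inr ⟨j-1, by omega, by omega, h⟩)
        · have h2 := (Finset.mem_inter.mp h).1
          rcases mem_Xset.mp h2 with h1 | ⟨i, hi1, hi2, h1⟩
          · exact mem_Xset.mpr (Or.inl h1)
          · exact mem_Xset.mpr (Or.inr ⟨i, by omega, hi2, h1⟩)
      rw [Finset.mem_union]
      have fromTv : x ∈ Tv ρ (j-1) → x ∈ Sv ρ j ∨ x ∈ ρ.Yset j := by
        intro h
        rcases hDp (j-1) (by omega) h with h1 | ⟨i, hi1, hi2, h1⟩
        · exact Or.inr (mem_Yset.mpr (Or.inl h1))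
        · rcases (show j ≤ i by omega).lt_or_eq with hlt | heq
          · exact Or.inr (mem_Yset.mpr (Or.inr (Or.inr ⟨i, hlt, hi2, Or.inl h1⟩)))
          · exact Or.inl (by rwa [← heq] at h1)
      have key : x ∈ Sv ρ j ∨ x ∈ ρ.Yset j := by
        rcases Finset.mem_union.mp hx with h | h
        · exact fromTv h
        · have hYm := (Finset.mem_inter.mp h).2
          rcases mem_Yset.mp hYm with h1 | h1 | ⟨i, hi1, hi2, h1⟩
          · exact Or.inr (mem_Yset.mpr (Or.inl h1))
          · exact fromTv h1
          · rcases (show j ≤ i by omega).lt_or_eq with hlt | heq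
            · exact Or.inr (mem_Yset.mpr (Or.inr (Or.inr ⟨i, hlt, hi2, h1⟩)))
            · rcases h1 with h1 | h1
              · exact Or.inl (by rwa [← heq] at h1)
              · exact Or.inr (mem_Yset.mpr (Or.inr (Or.inl (by rwa [← heq] at h1))))
      rcases key with h | h
      · exact Or.inl h
      · exact Or.inr (Finset.mem_inter.mpr ⟨hXj, h⟩)
    · rw [if_neg hjk]
      intro x hx
      have fromTv : x ∈ Tv ρ (j-1) → x ∈ ρ.rhs.varFinset := by
        intro h
        rcases hDp (j-1) (by omega) h with h1 | ⟨i, hi1, hi2, _⟩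
        · exact h1
        · omega
      rcases Finset.mem_union.mp hx with h | h
      · exact fromTv h
      · have hYm := (Finset.mem_inter.mp h).2
        rcases mem_Yset.mp hYm with h1 | h1 | ⟨i, hi1, hi2, _⟩
        · exact h1
        · exact fromTv h1
        · omega

lemma ruleOpt_inv (hdet : ρ.Det) (hNE : ∀ j ≤ ρ.conds.length, (ruleOpt u ρ j).NE)
    {u' : ℕ → α} (hu : ∀ i < ρ.conds.length, u' i = u (ρ.conds.length - 1 - i))
    {j} (hj : j ≤ ρ.conds.length) :
    ruleOpt u' ρ.inv j = (ruleOpt u ρ (ρ.conds.length - j)).inv := by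
  have hmk : ∀ (a b : Term α), (ERule.mk a b []).inv = ERule.mk b a [] := fun a b => rfl
  unfold ruleOpt
  rw [hmk]
  congr 1
  · by_cases hj0 : j = 0
    · subst hj0
      rw [if_pos rfl, if_neg (by omega)]
      rfl
    · rw [if_neg hj0, if_pos (show ρ.conds.length - j < ρ.conds.length by omega),
        hu (j-1) (by omega), inv_conds_getD (show j-1 < ρ.conds.length by omega),
        Zset_inv hdet hNE (show j-1 < ρ.conds.length by omega),
        show ρ.conds.length - 1 - (j-1) = ρ.conds.length - j by omega]
  · by_cases hjk : j < ρ.conds.length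
    · rw [if_pos (show j < ρ.inv.conds.length by rw [inv_conds_length]; exact hjk),
        if_neg (show ¬ ρ.conds.length - j = 0 by omega),
        hu j hjk, inv_conds_getD hjk, Zset_inv hdet hNE hjk,
        show ρ.conds.length - 1 - j = ρ.conds.length - j - 1 by omega]
    · have hj' : j = ρ.conds.length := by omega
      subst hj'
      rw [if_neg (show ¬ ρ.conds.length < ρ.inv.conds.length by rw [inv_conds_length]; omega),
        if_pos (by omega)]
      rfl

lemma unravelOpt_inv_mem (hdet : ρ.Det) (hNE : ∀ j ≤ ρ.conds.length, (ruleOpt u ρ j).NE)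
    {u' : ℕ → α} (hu : ∀ i < ρ.conds.length, u' i = u (ρ.conds.length - 1 - i)) {q} :
    q ∈ unravelOpt u' ρ.inv ↔ ∃ q' ∈ unravelOpt u ρ, q = q'.inv := by
  rw [mem_unravelOpt]
  constructor
  · rintro ⟨j, hj, rfl⟩
    rw [inv_conds_length] at hj
    exact ⟨ruleOpt u ρ (ρ.conds.length - j),
      mem_unravelOpt.mpr ⟨_, by omega, rfl⟩, ruleOpt_inv hdet hNE hu hj⟩
  · rintro ⟨q', hq', rfl⟩
    obtain ⟨j, hj, rfl⟩ := mem_unravelOpt.mp hq'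
    refine ⟨ρ.conds.length - j, by rw [inv_conds_length]; omega, ?_⟩
    rw [ruleOpt_inv hdet hNE hu (by omega),
      show ρ.conds.length - (ρ.conds.length - j) = j by omega]

end

end InvAux

/-- Let `R` be an eDCTRS, unraveled by `U_opt` with U symbols `u`,
and let the inverted system `(R)⁻¹` be unraveled with U symbols `u'` obtained by the
renaming `U^ρ_i = U^{(ρ)⁻¹}_{k-i+1}`. Then:
(1) `R` is `U_opt`-NE iff `(R)⁻¹` is a 3-eDCTRS;
(2) if `R` is `U_opt`-NE, then (a) `U_opt((R)⁻¹) = (U_opt(R))⁻¹`,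
(b) `R` is `U_opt`-LL iff `(R)⁻¹` is `U_opt`-RL, and
(c) `R` is `U_opt`-RL iff `(R)⁻¹` is `U_opt`-LL;
(3) `R` is non-LV iff `(R)⁻¹` is non-RV; (4) `R` is non-RV iff `(R)⁻¹` is non-LV. -/
theorem uopt_inv_duality {α : Type u} (R : Set (ERule α)) (u u' : ERule α → ℕ → α)
    (hdet : ∀ ρ ∈ R, ρ.Det)
    (hu' : ∀ ρ ∈ R, ∀ i < ρ.conds.length,
      u' ρ.inv i = u ρ (ρ.conds.length - 1 - i)) :
    ((∀ ρ ∈ R, ∀ q ∈ unravelOpt (u ρ) ρ, q.NE) ↔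
        (∀ ρ' ∈ ERule.inv '' R, ρ'.Det ∧ ρ'.Type3)) ∧
    ((∀ ρ ∈ R, ∀ q ∈ unravelOpt (u ρ) ρ, q.NE) →
        (UoptSys u' (ERule.inv '' R) = ERule.inv '' (UoptSys u R) ∧
          ((∀ ρ ∈ R, ∀ q ∈ unravelOpt (u ρ) ρ, q.LL) ↔
            (∀ ρ' ∈ ERule.inv '' R, ∀ q ∈ unravelOpt (u' ρ') ρ', q.RL)) ∧
          ((∀ ρ ∈ R, ∀ q ∈ unravelOpt (u ρ) ρ, q.RL) ↔
            (∀ ρ' ∈ ERule.inv '' R, ∀ q ∈ unravelOpt (u' ρ') ρ', q.LL)))) ∧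
    ((∀ ρ ∈ R, ρ.nonLV) ↔ (∀ ρ' ∈ ERule.inv '' R, ρ'.nonRV)) ∧
    ((∀ ρ ∈ R, ρ.nonRV) ↔ (∀ ρ' ∈ ERule.inv '' R, ρ'.nonLV)) := by
  refine ⟨?_, ?_, ?_, ?_⟩
  · -- Part (1)
    constructor
    · rintro hNEall ρ' ⟨ρ, hρ, rfl⟩
      have hd := hdet ρ hρ
      have hNE : ∀ j ≤ ρ.conds.length, (InvAux.ruleOpt (u ρ) ρ j).NE :=
        fun j hj => hNEall ρ hρ _ (InvAux.mem_unravelOpt.mpr ⟨j, hj, rfl⟩)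
      exact ⟨InvAux.invDet hd hNE, InvAux.invType3 hd hNE⟩
    · intro h ρ hρ q hq
      obtain ⟨j, hj, rfl⟩ := InvAux.mem_unravelOpt.mp hq
      obtain ⟨hD, hT⟩ := h ρ.inv ⟨ρ, hρ, rfl⟩
      exact InvAux.NE_ruleOpt_of_inv (hdet ρ hρ) hD hT j hj
  · -- Part (2)
    intro hNEall
    have hNE : ∀ ρ ∈ R, ∀ j ≤ ρ.conds.length, (InvAux.ruleOpt (u ρ) ρ j).NE :=
      fun ρ hρ j hj => hNEall ρ hρ _ (InvAux.mem_unravelOpt.mpr ⟨j, hj, rfl⟩)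
    refine ⟨?_, ?_, ?_⟩
    · ext q
      simp only [UoptSys, Set.mem_setOf_eq, Set.mem_image]
      constructor
      · rintro ⟨ρ', ⟨ρ, hρ, rfl⟩, hq⟩
        obtain ⟨q', hq', rfl⟩ :=
          (InvAux.unravelOpt_inv_mem (hdet ρ hρ) (hNE ρ hρ) (hu' ρ hρ)).mp hq
        exact ⟨q', ⟨ρ, hρ, hq'⟩, rfl⟩
      · rintro ⟨q', ⟨ρ, hρ, hq'⟩, rfl⟩
        exact ⟨ρ.inv, ⟨ρ, hρ, rfl⟩,
          (InvAux.unravelOpt_inv_mem (hdet ρ hρ) (hNE ρ hρ) (hu' ρ hρ)).mpr ⟨q', hq', rfl⟩⟩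
    · constructor
      · rintro hLL ρ' ⟨ρ, hρ, rfl⟩ q hq
        obtain ⟨q', hq', rfl⟩ :=
          (InvAux.unravelOpt_inv_mem (hdet ρ hρ) (hNE ρ hρ) (hu' ρ hρ)).mp hq
        exact hLL ρ hρ q' hq'
      · intro hRL ρ hρ q hq
        exact hRL ρ.inv ⟨ρ, hρ, rfl⟩ q.inv
          ((InvAux.unravelOpt_inv_mem (hdet ρ hρ) (hNE ρ hρ) (hu' ρ hρ)).mpr ⟨q, hq, rfl⟩)
    · constructor
      · rintro hRLall ρ' ⟨ρ, hρ, rfl⟩ q hq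
        obtain ⟨q', hq', rfl⟩ :=
          (InvAux.unravelOpt_inv_mem (hdet ρ hρ) (hNE ρ hρ) (hu' ρ hρ)).mp hq
        exact hRLall ρ hρ q' hq'
      · intro hLLall ρ hρ q hq
        exact hLLall ρ.inv ⟨ρ, hρ, rfl⟩ q.inv
          ((InvAux.unravelOpt_inv_mem (hdet ρ hρ) (hNE ρ hρ) (hu' ρ hρ)).mpr ⟨q, hq, rfl⟩)
  · -- Part (3)
    constructor
    · rintro h ρ' ⟨ρ, hρ, rfl⟩
      exact h ρ hρ
    · intro h ρ hρ
      exact h ρ.inv ⟨ρ, hρ, rfl⟩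
  · -- Part (4)
    constructor
    · rintro h ρ' ⟨ρ, hρ, rfl⟩
      exact h ρ hρ
    · intro h ρ hρ
      exact h ρ.inv ⟨ρ, hρ, rfl⟩
end
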